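/- Let K > 0, A, B ∈ ℝ, R > 0, and let L : [0, R] → ℝ be continuous and satisfy the integral inequality L(r) ≥ A − B r + K ∫₀^r ∫₀^s L(t) dt ds for all r ∈ [0, R]. Then L(r) ≥ Z(r) for all r ∈ [0, R], where Z(r) = A cosh(√K r) − (B/√K) sinh(√K r) is the solution of the corresponding integral equality Z(r) = A − B r + K ∫₀^r ∫₀^s Z(t) dt ds. -/

import Mathlib

/- STATEMENT 11: the Grönwall-type comparison step in the proof of Proposition 3.4:
   a continuous L on [0,R] satisfying L(r) ≥ A − Br + K∫₀^r∫₀^s L(t) dt ds is bounded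
   below by the solution Z(r) = A cosh(√K r) − (B/√K) sinh(√K r) of the corresponding
   integral equality. -/


open Real intervalIntegral MeasureTheory Filter

lemma pow_double_int (m : ℕ) (r : ℝ) :
    ∫ s in (0:ℝ)..r, ∫ t in (0:ℝ)..s, t ^ m
      = r ^ (m + 2) / ((m + 1) * (m + 2)) := by
  have inner : ∀ s : ℝ, ∫ t in (0:ℝ)..s, t ^ m = s ^ (m+1) / (m+1) := by
    intro s; simp [integral_pow]
  rw [intervalIntegral.integral_congr (g := fun s => s ^ (m+1) * ((m:ℝ)+1)⁻¹)
    (fun s _ => by rw [inner s, div_eq_mul_inv])]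
  rw [intervalIntegral.integral_mul_const, integral_pow]
  have h1 : ((m:ℝ)+1) ≠ 0 := by positivity
  have h2 : ((m:ℝ)+2) ≠ 0 := by positivity
  field_simp
  ring_nf
  push_cast
  ring

lemma Z_identity (c : ℝ) (hc : 0 < c) (A B r : ℝ) :
    A - B * r + c^2 * ∫ s in (0:ℝ)..r, ∫ t in (0:ℝ)..s,
      (A * Real.cosh (c*t) - (B/c) * Real.sinh (c*t))
    = A * Real.cosh (c*r) - (B/c) * Real.sinh (c*r) := by
  have hc' : c ≠ 0 := hc.ne'
  set Z : ℝ → ℝ := fun t => A * Real.cosh (c*t) - (B/c) * Real.sinh (c*t) with hZdef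
  have Zc : Continuous Z := by
    apply Continuous.sub
    · exact continuous_const.mul (Real.continuous_cosh.comp (continuous_const.mul continuous_id))
    · exact continuous_const.mul (Real.continuous_sinh.comp (continuous_const.mul continuous_id))
  have dsinh : ∀ x : ℝ, HasDerivAt (fun x : ℝ => Real.sinh (c*x)) (Real.cosh (c*x) * c) x := by
    intro x
    have := (Real.hasDerivAt_sinh (c*x)).comp x
      (by simpa using (hasDerivAt_id x).const_mul c : HasDerivAt (fun x : ℝ => c * x) c x)
    exact this
  have dcosh : ∀ x : ℝ, HasDerivAt (fun x : ℝ => Real.cosh (c*x)) (Real.sinh (c*x) * c) x := by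
    intro x
    have := (Real.hasDerivAt_cosh (c*x)).comp x
      (by simpa using (hasDerivAt_id x).const_mul c : HasDerivAt (fun x : ℝ => c * x) c x)
    exact this
  have hF : ∀ s : ℝ, ∫ t in (0:ℝ)..s, Z t
      = A/c * Real.sinh (c*s) + B/c^2 * (1 - Real.cosh (c*s)) := by
    intro s
    have key : ∫ t in (0:ℝ)..s, Z t
        = (A/c * Real.sinh (c*s) + B/c^2 * (1 - Real.cosh (c*s)))
          - (A/c * Real.sinh (c*0) + B/c^2 * (1 - Real.cosh (c*0))) := by
      apply intervalIntegral.integral_eq_sub_of_hasDerivAt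
      · intro x _
        have e1 : HasDerivAt (fun x => A/c * Real.sinh (c*x)) (A * Real.cosh (c*x)) x := by
          refine ((dsinh x).const_mul (A/c)).congr_deriv ?_
          field_simp
        have e2 : HasDerivAt (fun x => B/c^2 * (1 - Real.cosh (c*x)))
            (-(B/c) * Real.sinh (c*x)) x := by
          refine (((dcosh x).const_sub 1).const_mul (B/c^2)).congr_deriv ?_
          field_simp
        refine (e1.add e2).congr_deriv ?_
        ring
      · exact Zc.intervalIntegrable _ _
    simpa using key
  have hG : ∫ s in (0:ℝ)..r, (A/c * Real.sinh (c*s) + B/c^2 * (1 - Real.cosh (c*s)))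
      = A/c^2 * (Real.cosh (c*r) - 1) + B/c^2 * (r - Real.sinh (c*r)/c) := by
    have key : ∫ s in (0:ℝ)..r, (A/c * Real.sinh (c*s) + B/c^2 * (1 - Real.cosh (c*s)))
        = (A/c^2 * (Real.cosh (c*r) - 1) + B/c^2 * (r - Real.sinh (c*r)/c))
          - (A/c^2 * (Real.cosh (c*0) - 1) + B/c^2 * ((0:ℝ) - Real.sinh (c*0)/c)) := by
      apply intervalIntegral.integral_eq_sub_of_hasDerivAt
      · intro x _
        have d1 : HasDerivAt (fun x : ℝ => Real.cosh (c*x) - 1) (Real.sinh (c*x) * c) x :=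
          (dcosh x).sub_const 1
        have d2 : HasDerivAt (fun x : ℝ => x - Real.sinh (c*x)/c)
            (1 - Real.cosh (c*x) * c / c) x :=
          (hasDerivAt_id x).sub ((dsinh x).div_const c)
        have g1 : HasDerivAt (fun x => A/c^2 * (Real.cosh (c*x) - 1))
            (A/c * Real.sinh (c*x)) x := by
          refine (d1.const_mul (A/c^2)).congr_deriv ?_
          field_simp
        have g2 : HasDerivAt (fun x => B/c^2 * (x - Real.sinh (c*x)/c))
            (B/c^2 * (1 - Real.cosh (c*x))) x := by
          refine (d2.const_mul (B/c^2)).congr_deriv ?_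
          field_simp
        exact g1.add g2
      · apply Continuous.intervalIntegrable
        apply Continuous.add
        · exact continuous_const.mul (Real.continuous_sinh.comp (continuous_const.mul continuous_id))
        · exact continuous_const.mul (continuous_const.sub
            (Real.continuous_cosh.comp (continuous_const.mul continuous_id)))
    simpa using key
  rw [intervalIntegral.integral_congr (fun s _ => hF s), hG]
  field_simp
  ring

theorem gronwall_comparison (K : ℝ) (hK : 0 < K) (A B R : ℝ) (hR : 0 < R)
    (L : ℝ → ℝ) (hL : ContinuousOn L (Set.Icc 0 R))
    (hineq : ∀ r ∈ Set.Icc (0 : ℝ) R,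
      A - B * r + K * ∫ s in (0 : ℝ)..r, ∫ t in (0 : ℝ)..s, L t ≤ L r) :
    ∀ r ∈ Set.Icc (0 : ℝ) R,
      A * Real.cosh (Real.sqrt K * r) -
          (B / Real.sqrt K) * Real.sinh (Real.sqrt K * r) ≤ L r := by
  set c := Real.sqrt K with hcdef
  have hc : 0 < c := Real.sqrt_pos.mpr hK
  have hKc : K = c^2 := (Real.sq_sqrt hK.le).symm
  set Z : ℝ → ℝ := fun t => A * Real.cosh (c*t) - (B/c) * Real.sinh (c*t) with hZdef
  have Zc : Continuous Z := by
    apply Continuous.sub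
    · exact continuous_const.mul (Real.continuous_cosh.comp (continuous_const.mul continuous_id))
    · exact continuous_const.mul (Real.continuous_sinh.comp (continuous_const.mul continuous_id))
  set W : ℝ → ℝ := fun t => L t - Z t with hWdef
  have hWc : ContinuousOn W (Set.Icc 0 R) := hL.sub Zc.continuousOn
  -- interval integrability of L and W on subintervals
  have hLint : ∀ s ∈ Set.Icc (0:ℝ) R, IntervalIntegrable L volume 0 s := by
    intro s hs
    apply ContinuousOn.intervalIntegrable
    rw [Set.uIcc_of_le hs.1]
    exact hL.mono (Set.Icc_subset_Icc le_rfl hs.2)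
  have hWint : ∀ s ∈ Set.Icc (0:ℝ) R, IntervalIntegrable W volume 0 s := by
    intro s hs
    exact (hLint s hs).sub (Zc.intervalIntegrable _ _)
  -- the key inequality for W
  have hWineq : ∀ r ∈ Set.Icc (0:ℝ) R,
      K * ∫ s in (0:ℝ)..r, ∫ t in (0:ℝ)..s, W t ≤ W r := by
    intro r hr
    have hsplit : ∫ s in (0:ℝ)..r, ∫ t in (0:ℝ)..s, W t
        = (∫ s in (0:ℝ)..r, ∫ t in (0:ℝ)..s, L t)
          - ∫ s in (0:ℝ)..r, ∫ t in (0:ℝ)..s, Z t := by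
      have inner : ∀ s ∈ Set.uIcc (0:ℝ) r,
          ∫ t in (0:ℝ)..s, W t = (∫ t in (0:ℝ)..s, L t) - ∫ t in (0:ℝ)..s, Z t := by
        intro s hs
        rw [Set.uIcc_of_le hr.1] at hs
        exact intervalIntegral.integral_sub (hLint s ⟨hs.1, hs.2.trans hr.2⟩)
          (Zc.intervalIntegrable _ _)
      rw [intervalIntegral.integral_congr inner]
      apply intervalIntegral.integral_sub
      · apply ContinuousOn.intervalIntegrable
        have hcont := intervalIntegral.continuousOn_primitive_interval'
          (μ := volume) (hLint R ⟨hR.le, le_rfl⟩) Set.left_mem_uIcc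
        apply hcont.mono
        rw [Set.uIcc_of_le hr.1, Set.uIcc_of_le hR.le]
        exact Set.Icc_subset_Icc le_rfl hr.2
      · exact (intervalIntegral.continuous_primitive
          (fun a b => Zc.intervalIntegrable a b) 0).intervalIntegrable _ _
    have h1 := hineq r hr
    have h2 := Z_identity c hc A B r
    rw [← hKc] at h2
    have h2' : A - B * r + K * ∫ s in (0:ℝ)..r, ∫ t in (0:ℝ)..s, Z t = Z r := h2
    have hWr : W r = L r - Z r := rfl
    rw [hWr, hsplit, mul_sub]
    linarith [h1, h2']
  -- bound on W
  obtain ⟨C, hC⟩ := (isCompact_Icc (a := (0:ℝ)) (b := R)).exists_bound_of_continuousOn hWc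
  have hC0 : 0 ≤ C := le_trans (norm_nonneg _) (hC 0 ⟨le_rfl, hR.le⟩)
  -- the iterated bound
  have key : ∀ n : ℕ, ∀ r ∈ Set.Icc (0:ℝ) R,
      -(C * (K * r^2)^n / (2*n).factorial) ≤ W r := by
    intro n
    induction n with
    | zero =>
      intro r hr
      have habs := hC r hr
      rw [Real.norm_eq_abs] at habs
      have hneg := neg_abs_le (W r)
      simp only [pow_zero, Nat.mul_zero, Nat.factorial_zero, Nat.cast_one, mul_one, div_one]
      linarith
    | succ n ih =>
      intro r hr
      set c0 : ℝ := -(C * K^n / (2*n).factorial) with hc0def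
      have hgpt : ∀ t ∈ Set.Icc (0:ℝ) R, c0 * t^(2*n) ≤ W t := by
        intro t ht
        have h1 := ih t ht
        have h2 : -(C * (K * t^2)^n / (2*n).factorial) = c0 * t^(2*n) := by
          rw [hc0def, mul_pow, ← pow_mul]
          ring
        rw [← h2]
        exact h1
      have hrR : r ≤ R := hr.2
      have hr0 : 0 ≤ r := hr.1
      -- inner monotonicity
      have mono_inner : ∀ s ∈ Set.Icc (0:ℝ) r,
          ∫ t in (0:ℝ)..s, c0 * t^(2*n) ≤ ∫ t in (0:ℝ)..s, W t := by
        intro s hs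
        apply intervalIntegral.integral_mono_on hs.1
        · exact ((continuous_const.mul (continuous_pow (2*n))).intervalIntegrable _ _)
        · exact hWint s ⟨hs.1, hs.2.trans hrR⟩
        · intro t ht
          exact hgpt t ⟨ht.1, ht.2.trans (hs.2.trans hrR)⟩
      have mono_outer : ∫ s in (0:ℝ)..r, (∫ t in (0:ℝ)..s, c0 * t^(2*n))
          ≤ ∫ s in (0:ℝ)..r, ∫ t in (0:ℝ)..s, W t := by
        apply intervalIntegral.integral_mono_on hr0
        · apply Continuous.intervalIntegrable
          exact intervalIntegral.continuous_primitive
            (fun a b => (continuous_const.mul (continuous_pow (2*n))).intervalIntegrable a b) 0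
        · apply ContinuousOn.intervalIntegrable
          have hWR : IntegrableOn W (Set.uIcc 0 R) volume := by
            rw [Set.uIcc_of_le hR.le]
            exact (hWc.integrableOn_compact isCompact_Icc)
          have hcont := intervalIntegral.continuousOn_primitive_interval (a := (0:ℝ)) (b := R) hWR
          apply hcont.mono
          rw [Set.uIcc_of_le hr0, Set.uIcc_of_le hR.le]
          exact Set.Icc_subset_Icc le_rfl hrR
        · exact mono_inner
      -- compute the left double integral
      have hcomp : ∫ s in (0:ℝ)..r, (∫ t in (0:ℝ)..s, c0 * t^(2*n))
          = c0 * (r^(2*n+2) / ((2*n+1) * (2*n+2))) := by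
        have inner_eq : ∀ s ∈ Set.uIcc (0:ℝ) r,
            ∫ t in (0:ℝ)..s, c0 * t^(2*n) = c0 * ∫ t in (0:ℝ)..s, t^(2*n) := by
          intro s _; exact intervalIntegral.integral_const_mul _ _
        rw [intervalIntegral.integral_congr inner_eq, intervalIntegral.integral_const_mul,
          pow_double_int]
        push_cast
        ring_nf
      have hfin := hWineq r hr
      have hstep : K * (c0 * (r^(2*n+2) / ((2*n+1) * (2*n+2))))
          ≤ K * ∫ s in (0:ℝ)..r, ∫ t in (0:ℝ)..s, W t := by
        apply mul_le_mul_of_nonneg_left _ hK.le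
        rw [← hcomp]; exact mono_outer
      have heq : K * (c0 * (r^(2*n+2) / ((2*n+1) * (2*n+2))))
          = -(C * (K * r^2)^(n+1) / (2*(n+1)).factorial) := by
        have hfact : ((2*(n+1)).factorial : ℝ)
            = (2*n+2) * ((2*n+1) * ((2*n).factorial : ℝ)) := by
          have h : 2*(n+1) = (2*n+1)+1 := by ring
          rw [h, Nat.factorial_succ, Nat.factorial_succ]
          push_cast; ring
        rw [hc0def, hfact, mul_pow, ← pow_mul]
        have f1 : ((2*n).factorial : ℝ) ≠ 0 := by positivity
        have f2 : (2*(n:ℝ)+1) ≠ 0 := by positivity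
        have f3 : (2*(n:ℝ)+2) ≠ 0 := by positivity
        field_simp
        ring
      rw [← heq]
      exact le_trans hstep hfin
  -- pass to the limit
  intro r hr
  have hterm : ∀ n : ℕ, -(C * (K * r^2)^n / (2*n).factorial) ≤ W r := fun n => key n r hr
  set x : ℝ := K * r^2 with hxdef
  have hx0 : 0 ≤ x := by positivity
  have hlow : Tendsto (fun n : ℕ => -(C * (x^n / n.factorial))) atTop (nhds 0) := by
    have := (FloorSemiring.tendsto_pow_div_factorial_atTop (K := ℝ) x).const_mul C
    simpa using this.neg
  have hsq : Tendsto (fun n : ℕ => -(C * x^n / (2*n).factorial)) atTop (nhds 0) := by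
    apply tendsto_of_tendsto_of_tendsto_of_le_of_le hlow tendsto_const_nhds
    · intro n
      have hfle : (n.factorial : ℝ) ≤ ((2*n).factorial : ℝ) := by
        exact_mod_cast Nat.factorial_le (by omega)
      have hfpos : (0:ℝ) < n.factorial := by positivity
      have h1 : C * x^n / (2*n).factorial ≤ C * x^n / n.factorial := by
        apply div_le_div_of_nonneg_left (by positivity) hfpos hfle
      simp only [mul_div_assoc] at h1 ⊢
      linarith
    · intro n
      have : 0 ≤ C * x^n / (2*n).factorial := by positivity
      linarith
  have hW0 : 0 ≤ W r := by
    apply le_of_tendsto' hsq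
    intro n
    have := hterm n
    rw [hxdef] at this ⊢
    linarith [this]
  have hWr : W r = L r - Z r := rfl
  have hZL : Z r ≤ L r := by linarith [hW0, hWr.le, hWr.ge]
  exact hZL
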